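/- Let n ≥ 0, let P₀ ∈ ℝ^{d×d} be positive semidefinite, let e₀, …, e_n be symmetric d×d matrices, and define p₀ := P₀ + e₀ and p_k := Φ(p_{k−1}) + e_k for 1 ≤ k ≤ n; assume each p_k is positive semidefinite. Then p_n = Φ_n(P₀) + Σ_{k=0}^{n} 𝓔_{n−k}(p_k) e_k 𝓔_{n−k}(Φ(p_{k−1}))ᵀ, with the convention Φ(p_{−1}) := P₀ for the term k = 0. -/

import Mathlib

open Matrix

noncomputable section

/-- The Riccati map `Φ(P) := A (I + P S)⁻¹ P Aᵀ + R`. -/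
def Ricc {d : ℕ} (A S R P : Matrix (Fin d) (Fin d) ℝ) : Matrix (Fin d) (Fin d) ℝ :=
  A * (1 + P * S)⁻¹ * P * Aᵀ + R

/-- The map `𝓔(P) := A (I + P S)⁻¹`. -/
def Emat {d : ℕ} (A S P : Matrix (Fin d) (Fin d) ℝ) : Matrix (Fin d) (Fin d) ℝ :=
  A * (1 + P * S)⁻¹

/-- The directed products `𝓔₀(P) := I`, `𝓔_{n+1}(P) := 𝓔_n(Φ(P)) 𝓔(P)`. -/
def Edir {d : ℕ} (A S R : Matrix (Fin d) (Fin d) ℝ) :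
    ℕ → Matrix (Fin d) (Fin d) ℝ → Matrix (Fin d) (Fin d) ℝ
  | 0, _ => 1
  | n + 1, P => Edir A S R n (Ricc A S R P) * Emat A S P

section Aux

variable {d : ℕ} {A S R P Q : Matrix (Fin d) (Fin d) ℝ}

lemma symm_of_psd (hP : P.PosSemidef) : Pᵀ = P := by
  rw [← conjTranspose_eq_transpose_of_trivial]; exact hP.isHermitian

lemma det_unit_PS (hS : S.PosSemidef) (hP : P.PosSemidef) : IsUnit (1 + P * S).det := by
  obtain ⟨C, hC⟩ : ∃ C : Matrix (Fin d) (Fin d) ℝ, S = Cᴴ * C := by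
    open scoped MatrixOrder in
    exact CStarAlgebra.nonneg_iff_eq_star_mul_self.mp hS.nonneg
  have h1 : (1 + P * S).det = (1 + C * (P * Cᴴ)).det := by
    rw [hC, ← Matrix.mul_assoc, Matrix.det_one_add_mul_comm]
  have h2 : (1 + C * (P * Cᴴ)).PosDef := by
    rw [← Matrix.mul_assoc]
    exact Matrix.PosDef.add_posSemidef Matrix.PosDef.one
      (hP.mul_mul_conjTranspose_same C)
  rw [h1]
  exact h2.det_pos.ne'.isUnit

lemma transpose_one_add_PS (hS : S.PosSemidef) (hP : P.PosSemidef) :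
    (1 + P * S)ᵀ = 1 + S * P := by
  rw [transpose_add, transpose_one, transpose_mul, symm_of_psd hS, symm_of_psd hP]

lemma det_unit_SP (hS : S.PosSemidef) (hP : P.PosSemidef) : IsUnit (1 + S * P).det := by
  rw [← transpose_one_add_PS hS hP, det_transpose]
  exact det_unit_PS hS hP

lemma Emat_transpose (hS : S.PosSemidef) (hQ : Q.PosSemidef) :
    (Emat A S Q)ᵀ = (1 + S * Q)⁻¹ * Aᵀ := by
  rw [Emat, transpose_mul, transpose_nonsing_inv, transpose_one_add_PS hS hQ]

lemma ricc_diff (hS : S.PosSemidef) (hP : P.PosSemidef) (hQ : Q.PosSemidef) :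
    Ricc A S R P = Ricc A S R Q + Emat A S P * (P - Q) * (Emat A S Q)ᵀ := by
  set M := (1 + P * S)⁻¹ with hM
  set N := (1 + S * Q)⁻¹ with hN
  have hMl : M * (1 + P * S) = 1 := nonsing_inv_mul _ (det_unit_PS hS hP)
  have hNr : (1 + S * Q) * N = 1 := mul_nonsing_inv _ (det_unit_SP hS hQ)
  have hQN : (1 + Q * S)⁻¹ * Q = Q * N := by
    have h1 : Q * (1 + S * Q) = (1 + Q * S) * Q := by noncomm_ring
    have h4 : Q = (1 + Q * S) * (Q * N) := by
      rw [← Matrix.mul_assoc, ← h1, hN,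
        mul_nonsing_inv_cancel_right _ _ (det_unit_SP hS hQ)]
    calc (1 + Q * S)⁻¹ * Q = (1 + Q * S)⁻¹ * ((1 + Q * S) * (Q * N)) := by rw [← h4]
      _ = Q * N := nonsing_inv_mul_cancel_left _ _ (det_unit_PS hS hQ)
  have main : M * (P - Q) * N = M * P - Q * N := by
    have e1 : P * (1 + S * Q) - (1 + P * S) * Q = P - Q := by noncomm_ring
    calc M * (P - Q) * N = M * ((P * (1 + S * Q) - (1 + P * S) * Q)) * N := by rw [e1]
      _ = M * (P * (1 + S * Q)) * N - M * ((1 + P * S) * Q) * N := by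
          rw [Matrix.mul_sub, Matrix.sub_mul]
      _ = M * P * ((1 + S * Q) * N) - (M * (1 + P * S)) * (Q * N) := by
          simp only [Matrix.mul_assoc]
      _ = M * P - Q * N := by rw [hNr, hMl, Matrix.mul_one, Matrix.one_mul]
  have hEQ : (Emat A S Q)ᵀ = N * Aᵀ := by rw [Emat_transpose hS hQ, hN]
  have hQN' : (1 + Q * S)⁻¹ * (Q * Aᵀ) = Q * (N * Aᵀ) := by
    rw [← Matrix.mul_assoc, hQN, Matrix.mul_assoc]
  have key : M * (P * Aᵀ) = Q * (N * Aᵀ) + M * ((P - Q) * (N * Aᵀ)) := by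
    simp only [← Matrix.mul_assoc]
    rw [main, sub_mul]
    abel
  rw [Ricc, Ricc, hEQ, Emat]
  simp only [Matrix.mul_assoc]
  rw [hQN', ← hM, key, Matrix.mul_add]
  abel

lemma ricc_posSemidef (hS : S.PosSemidef) (hR : R.PosDef) (hP : P.PosSemidef) :
    (Ricc A S R P).PosSemidef := by
  set M := (1 + P * S)⁻¹ with hM
  have hMt : Mᵀ = (1 + S * P)⁻¹ := by
    rw [hM, transpose_nonsing_inv, transpose_one_add_PS hS hP]
  have hNr : (1 + S * P) * (1 + S * P)⁻¹ = 1 := mul_nonsing_inv _ (det_unit_SP hS hP)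
  have e1 : P + P * S * P = P * (1 + S * P) := by noncomm_ring
  have hMP : M * P = M * (P + P * S * P) * Mᵀ := by
    rw [e1, hMt, Matrix.mul_assoc M, Matrix.mul_assoc P, hNr, Matrix.mul_one]
  have hpsd : (P + P * S * P).PosSemidef := by
    have h2 : (Pᴴ * S * P).PosSemidef := hS.conjTranspose_mul_mul_same P
    rw [hP.isHermitian] at h2
    exact hP.add h2
  have h3 : (A * M * P * Aᵀ).PosSemidef := by
    have h4 := hpsd.mul_mul_conjTranspose_same (A * M)
    have h5 : (A * M)ᴴ = Mᵀ * Aᵀ := by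
      rw [conjTranspose_eq_transpose_of_trivial, transpose_mul]
    rw [h5] at h4
    have h6 : A * M * (P + P * S * P) * (Mᵀ * Aᵀ) = A * M * P * Aᵀ := by
      calc A * M * (P + P * S * P) * (Mᵀ * Aᵀ)
          = A * (M * (P + P * S * P) * Mᵀ) * Aᵀ := by simp only [Matrix.mul_assoc]
        _ = A * (M * P) * Aᵀ := by rw [← hMP]
        _ = A * M * P * Aᵀ := by simp only [Matrix.mul_assoc]
    rwa [h6] at h4
  exact h3.add hR.posSemidef

lemma iter_diff (hS : S.PosSemidef) (hR : R.PosDef) (m : ℕ) (hP : P.PosSemidef)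
    (hQ : Q.PosSemidef) :
    (Ricc A S R)^[m] P = (Ricc A S R)^[m] Q +
      Edir A S R m P * (P - Q) * (Edir A S R m Q)ᵀ := by
  induction m generalizing P Q with
  | zero => simp [Edir]
  | succ m ih =>
    rw [Function.iterate_succ_apply, Function.iterate_succ_apply,
      ih (ricc_posSemidef hS hR hP) (ricc_posSemidef hS hR hQ)]
    congr 1
    have hd : Ricc A S R P - Ricc A S R Q = Emat A S P * (P - Q) * (Emat A S Q)ᵀ := by
      rw [ricc_diff hS hP hQ (R := R)]; abel
    rw [hd]
    show _ = Edir A S R m (Ricc A S R P) * Emat A S P * (P - Q) *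
      (Edir A S R m (Ricc A S R Q) * Emat A S Q)ᵀ
    rw [transpose_mul]
    simp only [Matrix.mul_assoc]

end Aux


/-- interpolating formula.  Let `P₀` be positive semidefinite, let
`e₀, …, e_n` be symmetric matrices and define `p₀ := P₀ + e₀`,
`p_k := Φ(p_{k−1}) + e_k` for `1 ≤ k ≤ n`; assume each `p_k` is positive semidefinite.
Then `p_n = Φ_n(P₀) + Σ_{k=0}^{n} 𝓔_{n−k}(p_k) e_k 𝓔_{n−k}(Φ(p_{k−1}))ᵀ`, with the
convention `Φ(p_{−1}) := P₀` for the term `k = 0`. -/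
theorem statement10 {d d₀ : ℕ} (hd : 1 ≤ d) (hd₀ : 1 ≤ d₀)
    (A : Matrix (Fin d) (Fin d) ℝ) (B : Matrix (Fin d₀) (Fin d) ℝ)
    (R : Matrix (Fin d) (Fin d) ℝ) (R₀ : Matrix (Fin d₀) (Fin d₀) ℝ)
    (hR : R.PosDef) (hR₀ : R₀.PosDef)
    (S : Matrix (Fin d) (Fin d) ℝ) (hSdef : S = Bᵀ * R₀⁻¹ * B)
    (n : ℕ) (P₀ : Matrix (Fin d) (Fin d) ℝ) (hP₀ : P₀.PosSemidef)
    (e p : ℕ → Matrix (Fin d) (Fin d) ℝ)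
    (he : ∀ k, k ≤ n → (e k)ᵀ = e k)
    (hp0 : p 0 = P₀ + e 0)
    (hpk : ∀ k, 1 ≤ k → k ≤ n → p k = Ricc A S R (p (k - 1)) + e k)
    (hpsd : ∀ k, k ≤ n → (p k).PosSemidef) :
    p n = (Ricc A S R)^[n] P₀ +
      ∑ k ∈ Finset.range (n + 1),
        Edir A S R (n - k) (p k) * e k *
          (Edir A S R (n - k) (if k = 0 then P₀ else Ricc A S R (p (k - 1))))ᵀ := by
  have hS : S.PosSemidef := by
    rw [hSdef, ← conjTranspose_eq_transpose_of_trivial]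
    exact (hR₀.posSemidef.inv).conjTranspose_mul_mul_same B
  set q : ℕ → Matrix (Fin d) (Fin d) ℝ :=
    fun k => if k = 0 then P₀ else Ricc A S R (p (k - 1)) with hq
  have hqpsd : ∀ k, k ≤ n → (q k).PosSemidef := by
    intro k hk
    by_cases h : k = 0
    · simpa [hq, h] using hP₀
    · simp only [hq, if_neg h]
      exact ricc_posSemidef hS hR (hpsd (k - 1) (le_trans (Nat.sub_le k 1) hk))
  have hpe : ∀ k, k ≤ n → p k = q k + e k := by
    intro k hk
    by_cases h : k = 0
    · subst h; simpa [hq] using hp0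
    · simp only [hq, if_neg h]
      exact hpk k (Nat.one_le_iff_ne_zero.mpr h) hk
  set f : ℕ → Matrix (Fin d) (Fin d) ℝ :=
    fun k => if k = 0 then (Ricc A S R)^[n] P₀
      else (Ricc A S R)^[n - (k - 1)] (p (k - 1)) with hf
  have hfq : ∀ k, k ≤ n → f k = (Ricc A S R)^[n - k] (q k) := by
    intro k hk
    by_cases h : k = 0
    · subst h; simp [hf, hq]
    · simp only [hf, hq, if_neg h]
      obtain ⟨j, rfl⟩ := Nat.exists_eq_succ_of_ne_zero h
      have h2 : n - j = (n - (j + 1)) + 1 := by omega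
      simp only [Nat.succ_sub_one]
      rw [h2, Function.iterate_succ_apply]
  have hstep : ∀ k, k ≤ n → f (k + 1) - f k =
      Edir A S R (n - k) (p k) * e k * (Edir A S R (n - k) (q k))ᵀ := by
    intro k hk
    have hf1 : f (k + 1) = (Ricc A S R)^[n - k] (p k) := by simp [hf]
    rw [hf1, hfq k hk, iter_diff hS hR (n - k) (hpsd k hk) (hqpsd k hk)]
    have h3 : p k - q k = e k := by rw [hpe k hk]; abel
    rw [h3]; abel
  have tel : ∑ k ∈ Finset.range (n + 1), (f (k + 1) - f k) = f (n + 1) - f 0 :=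
    Finset.sum_range_sub f (n + 1)
  have hsum : ∑ k ∈ Finset.range (n + 1), (f (k + 1) - f k)
      = ∑ k ∈ Finset.range (n + 1),
          Edir A S R (n - k) (p k) * e k * (Edir A S R (n - k) (q k))ᵀ :=
    Finset.sum_congr rfl fun k hk =>
      hstep k (Nat.lt_succ_iff.mp (Finset.mem_range.mp hk))
  show p n = (Ricc A S R)^[n] P₀ +
      ∑ k ∈ Finset.range (n + 1),
        Edir A S R (n - k) (p k) * e k * (Edir A S R (n - k) (q k))ᵀ
  rw [← hsum, tel]
  have hfn : f (n + 1) = p n := by simp [hf]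
  have hf0 : f 0 = (Ricc A S R)^[n] P₀ := by simp [hf]
  rw [hfn, hf0]
  abel
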